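/- Let X be a regular topological space that is scattered. Then X is weakly Whyburn, i.e., for every subset A of X that is not closed there exist a point x in (closure of A) \ A and a subset B of A such that (closure of B) \ B = {x}. -/
import Mathlib


/-- Every regular scattered space is weakly Whyburn: for every
non-closed set `A` there are `x ∈ closure A \ A` and `B ⊆ A` with
`closure B \ B = {x}`.  Scatteredness is stated as: every nonempty subspace has
an isolated point (in the subspace topology). -/
theorem regular_scattered_weaklyWhyburn {X : Type*} [TopologicalSpace X] [RegularSpace X]
    (hscat : ∀ S : Set X, S.Nonempty → ∃ x ∈ S, ∃ U : Set X, IsOpen U ∧ U ∩ S = {x})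
    (A : Set X) (hA : ¬ IsClosed A) :
    ∃ x ∈ closure A \ A, ∃ B ⊆ A, closure B \ B = {x} := by
  -- The set `S = closure A \ A` is nonempty since `A` is not closed.
  have hS : (closure A \ A).Nonempty := by
    rw [Set.diff_nonempty]
    intro h
    exact hA (closure_subset_iff_isClosed.mp h)
  obtain ⟨x, hxS, U, hUopen, hU⟩ := hscat _ hS
  -- Regularity: a closed neighborhood `t` of `x` inside `U`; let `V = interior t`.
  obtain ⟨t, ht, htc, htU⟩ :=
    exists_mem_nhds_isClosed_subset (hUopen.mem_nhds (by
      have : x ∈ U ∩ (closure A \ A) := hU ▸ rfl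
      exact this.1))
  set V : Set X := interior t with hV
  have hxV : x ∈ V := mem_interior_iff_mem_nhds.mpr ht
  have hclV : closure V ⊆ U := fun y hy =>
    htU (closure_minimal interior_subset htc hy)
  -- The witness set.
  refine ⟨x, hxS, closure (V ∩ A) ∩ A, Set.inter_subset_right, ?_⟩
  set B : Set X := closure (V ∩ A) ∩ A with hB
  have hclB : closure B ⊆ closure (V ∩ A) :=
    closure_minimal Set.inter_subset_left isClosed_closure
  have hxclVA : x ∈ closure (V ∩ A) := by
    exact (isOpen_interior (s := t)).inter_closure ⟨hxV, hxS.1⟩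
  ext y
  constructor
  · rintro ⟨hy1, hy2⟩
    have hyVA : y ∈ closure (V ∩ A) := hclB hy1
    have hyA : y ∉ A := fun h => hy2 ⟨hyVA, h⟩
    have hyU : y ∈ U := hclV (closure_mono Set.inter_subset_left hyVA)
    have hyclA : y ∈ closure A := closure_mono Set.inter_subset_right hyVA
    have : y ∈ U ∩ (closure A \ A) := ⟨hyU, hyclA, hyA⟩
    rw [hU] at this
    exact this
  · rintro rfl
    refine ⟨closure_mono (Set.subset_inter subset_closure Set.inter_subset_right) hxclVA,
      fun h => hxS.2 h.2⟩
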